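/- Suppose that for every graph-theoretic path P and every assignment of lists of size 4 to its vertices there exists a non-repetitive colouring from the lists. Then for every cycle C_n and every assignment of lists of size at least 5 to its vertices, there exists a colouring from the lists such that the colour sequence of every path of consecutive vertices along the cycle is non-repetitive. -/

import Mathlib

/-- A list is non-repetitive if no nonempty block `X ++ X` occurs as a block
of consecutive terms. -/
def IsNonrepetitive {α : Type*} (l : List α) : Prop :=
  ∀ X : List α, X ≠ [] → ¬ (X ++ X) <:+: l

private lemma zmod_val_add_one {n : ℕ} [NeZero n] (hn : 1 < n) (y : ZMod n)
    (h : y + 1 ≠ 0) : (y + 1).val = y.val + 1 := by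
  have h1 : ((y.val + 1 : ℕ) : ZMod n) = y + 1 := by
    rw [Nat.cast_add, Nat.cast_one, ZMod.natCast_rightInverse y]
  have h2 : (y + 1).val = (y.val + 1) % n := by rw [← h1, ZMod.val_natCast]
  have h3 : y.val < n := ZMod.val_lt y
  rcases lt_or_eq_of_le (Nat.succ_le_of_lt h3) with h4 | h4
  · rw [h2, Nat.mod_eq_of_lt h4]
  · exfalso
    apply h
    have h5 : y.val + 1 = n := h4
    rw [← (ZMod.val_eq_zero _), h2, h5, Nat.mod_self]

/-- Assuming paths are non-repetitively colourable from lists of size 4,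
every cycle `Cₙ` is facially non-repetitively colourable from lists of size
at least 5: every path of consecutive vertices along the cycle gets a
non-repetitive colour sequence. -/
theorem cycle_facially_nonrepetitive_5_choosable
    (hpath : ∀ (m : ℕ) (L : Fin m → Finset ℕ), (∀ i, (L i).card = 4) →
      ∃ c : Fin m → ℕ, (∀ i, c i ∈ L i) ∧ IsNonrepetitive (List.ofFn c)) :
    ∀ (n : ℕ), 3 ≤ n → ∀ (L : ZMod n → Finset ℕ), (∀ i, 5 ≤ (L i).card) →
      ∃ c : ZMod n → ℕ, (∀ i, c i ∈ L i) ∧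
        ∀ (i : ZMod n) (k : ℕ), k ≤ n →
          IsNonrepetitive ((List.range k).map (fun j => c (i + (j : ZMod n)))) := by
  intro n hn L hL
  have hNZ : NeZero n := ⟨by omega⟩
  obtain ⟨a, ha⟩ := Finset.card_pos.mp (show 0 < (L 0).card by have := hL 0; omega)
  -- lists for the path on vertices 1, ..., n-1
  have hsub : ∀ i : Fin (n-1),
      ∃ t ⊆ (L (((i : ℕ) + 1 : ℕ) : ZMod n)).erase a, t.card = 4 := by
    intro i
    apply Finset.exists_subset_card_eq
    have h1 := hL (((i : ℕ) + 1 : ℕ) : ZMod n)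
    have h2 := Finset.pred_card_le_card_erase
      (a := a) (s := L (((i : ℕ) + 1 : ℕ) : ZMod n))
    omega
  choose L' hL'sub hL'card using hsub
  obtain ⟨c', hc'mem, hc'rep⟩ := hpath (n-1) L' hL'card
  have hc'L : ∀ j : Fin (n-1), c' j ∈ L (((j : ℕ) + 1 : ℕ) : ZMod n) :=
    fun j => Finset.mem_of_mem_erase (hL'sub j (hc'mem j))
  have hc'ne : ∀ j : Fin (n-1), c' j ≠ a :=
    fun j => Finset.ne_of_mem_erase (hL'sub j (hc'mem j))
  have hvlt : ∀ x : ZMod n, x.val - 1 < n - 1 := fun x => by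
    have := ZMod.val_lt x; omega
  set c : ZMod n → ℕ := fun x => if x = 0 then a else c' ⟨x.val - 1, hvlt x⟩ with hc
  refine ⟨c, ?_, ?_⟩
  · intro x
    by_cases hx : x = 0
    · simpa [hc, hx] using ha
    · have hxv : x.val ≠ 0 := fun h => hx ((ZMod.val_eq_zero x).mp h)
      have hcast : (((x.val - 1 : ℕ) + 1 : ℕ) : ZMod n) = x := by
        rw [Nat.sub_add_cancel (by omega)]
        exact ZMod.natCast_rightInverse x
      have hmem := hc'L ⟨x.val - 1, hvlt x⟩
      simp only [hc, if_neg hx]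
      simpa [hcast] using hmem
  · intro i k hk
    have hgoal : ((List.range k).map (fun j => c (i + (j : ZMod n))))
        = (List.range k).map (fun j : ℕ => c (i + (j : ZMod n))) := by
      simp only [List.pure_def, List.bind_eq_flatMap, ← List.map_eq_flatMap,
        List.map_map]
      rfl
    rw [hgoal]
    intro X hX hinf
    obtain ⟨s, t, hst⟩ := hinf
    set m := X.length with hm
    have hm1 : 1 ≤ m := List.length_pos_iff.mpr hX
    set p := s.length with hp
    have hlen : p + 2*m + t.length = k := by
      have := congrArg List.length hst
      simp only [List.length_append, List.length_map, List.length_range] at this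
      omega
    rw [List.append_assoc] at hst
    -- the colours of the repeated block
    have hblock : ∀ r, (hr : r < 2*m) →
        (X ++ X)[r]'(by simp only [List.length_append]; omega)
          = c (i + ((p + r : ℕ) : ZMod n)) := by
      intro r hr
      have hi1 : p + r < (s ++ ((X ++ X) ++ t)).length := by
        simp only [List.length_append]; omega
      have h1 : (s ++ ((X ++ X) ++ t))[p + r]'hi1
          = (X ++ X)[r]'(by simp only [List.length_append]; omega) := by
        rw [List.getElem_append_right (by omega)]
        rw [List.getElem_append_left (by simp only [List.length_append]; omega)]
        congr 1
        omega
      rw [← h1, List.getElem_of_eq hst hi1]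
      simp only [List.getElem_map, List.getElem_range]
    -- both copies of X give equal colours
    have hpair : ∀ r, (hr : r < m) →
        (X ++ X)[r]'(by simp only [List.length_append]; omega)
          = (X ++ X)[r + m]'(by simp only [List.length_append]; omega) := by
      intro r hr
      rw [List.getElem_append_left (by omega), List.getElem_append_right (by omega)]
      congr 1
      omega
    by_cases hzero : ∃ r, r < 2*m ∧ i + ((p + r : ℕ) : ZMod n) = 0
    · -- the block passes through vertex 0
      obtain ⟨r0, hr0, hz0⟩ := hzero
      have hdist : ∀ r1, r1 < 2*m → r1 ≠ r0 → i + ((p + r1 : ℕ) : ZMod n) ≠ 0 := by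
        intro r1 h1 hne heq
        have h2 : ((p + r1 : ℕ) : ZMod n) = ((p + r0 : ℕ) : ZMod n) :=
          add_left_cancel (heq.trans hz0.symm)
        have h3 := congrArg ZMod.val h2
        rw [ZMod.val_natCast, ZMod.val_natCast,
          Nat.mod_eq_of_lt (by omega), Nat.mod_eq_of_lt (by omega)] at h3
        omega
      -- the partner position of r0 in the other copy of X
      obtain ⟨r1, hr1lt, hr1ne, hr1eq⟩ :
          ∃ r1, ∃ (hr1 : r1 < 2*m), r1 ≠ r0 ∧
            (X ++ X)[r1]'(by simp only [List.length_append]; omega)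
              = (X ++ X)[r0]'(by simp only [List.length_append]; omega) := by
        by_cases hcase : r0 < m
        · exact ⟨r0 + m, by omega, by omega, (hpair r0 hcase).symm⟩
        · exact ⟨r0 - m, by omega, by omega, by
            have := hpair (r0 - m) (by omega)
            rw [this]
            congr 1
            omega⟩
      have hv0 : (X ++ X)[r0]'(by simp only [List.length_append]; omega) = a := by
        rw [hblock r0 hr0, hz0]
        simp [hc]
      have hv1 : (X ++ X)[r1]'(by simp only [List.length_append]; omega) ≠ a := by
        rw [hblock r1 hr1lt]
        have hnz := hdist r1 hr1lt hr1ne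
        simp only [hc, if_neg hnz]
        exact hc'ne _
      exact hv1 (hr1eq.trans hv0)
    · -- the block avoids vertex 0 : it lies inside the path
      push_neg at hzero
      have hstep : ∀ r, r < 2*m →
          (i + ((p + r : ℕ) : ZMod n)).val = (i + ((p : ℕ) : ZMod n)).val + r := by
        intro r
        induction r with
        | zero => simp
        | succ r ih =>
          intro hr
          have h1 : (i + ((p + (r+1) : ℕ) : ZMod n))
              = (i + ((p + r : ℕ) : ZMod n)) + 1 := by push_cast; ring
          have h2 : (i + ((p + r : ℕ) : ZMod n)) + 1 ≠ 0 := by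
            rw [← h1]; exact hzero (r+1) hr
          rw [h1, zmod_val_add_one (by omega) _ h2, ih (by omega)]
          omega
      have hd1 : 1 ≤ (i + ((p : ℕ) : ZMod n)).val := by
        have h0 := hzero 0 (by omega)
        simp only [Nat.add_zero] at h0
        have : (i + ((p : ℕ) : ZMod n)).val ≠ 0 :=
          fun h => h0 ((ZMod.val_eq_zero _).mp h)
        omega
      set d := (i + ((p : ℕ) : ZMod n)).val - 1 with hd
      have hdbound : d + 2*m ≤ n - 1 := by
        have h1 := hstep (2*m - 1) (by omega)
        have h2 := ZMod.val_lt (i + ((p + (2*m - 1) : ℕ) : ZMod n))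
        omega
      have hfval : ∀ r, (hr : r < 2*m) →
          c (i + ((p + r : ℕ) : ZMod n)) = c' ⟨d + r, by omega⟩ := by
        intro r hr
        have hnz := hzero r hr
        simp only [hc, if_neg hnz]
        congr 1
        apply Fin.ext
        simp only []
        rw [hstep r hr]
        omega
      have heq : X ++ X = ((List.ofFn c').drop d).take (2*m) := by
        apply List.ext_getElem
        · simp
          omega
        · intro q h1 h2
          have hq : q < 2*m := by simp at h1; omega
          rw [hblock q hq, hfval q hq]
          have h3 : (((List.ofFn c').drop d).take (2*m))[q]'h2
              = (List.ofFn c')[d + q]'(by simp; omega) := by simp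
          rw [h3, List.getElem_ofFn]
      exact hc'rep X hX (heq ▸
        ((List.take_prefix _ _).isInfix.trans (List.drop_suffix _ _).isInfix))
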